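/- Work with N spin-1/2 particles in the matrix algebra M_N. Let ρ be a diagonal 2×2 complex matrix with trace 1 (ρ 0 1 = ρ 1 0 = 0 and ρ 0 0 + ρ 1 1 = 1), and let ρ^{⊗N} ∈ M_N be the product state with entries ρ^{⊗N} f g = ∏_k ρ (f k) (g k). Then for every λ ∈ ℝ and s ∈ ℂ: Tr( ρ^{⊗N} * exp( λ • (s·S₊ − (conj s)·S₋) ) ) = (cos(λ·|s|))^N, where exp is the matrix exponential, S₊ := ∑_k σ₊^{(k)} and S₋ := ∑_k σ₋^{(k)}. -/

import Mathlib

open Matrix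

/-- The Pauli lowering operator `σ₋`. -/
def σm : Matrix (Fin 2) (Fin 2) ℂ := !![0, 0; 1, 0]

/-- The Pauli raising operator `σ₊`. -/
def σp : Matrix (Fin 2) (Fin 2) ℂ := !![0, 1; 0, 0]

/-- The Pauli matrix `σ_z`. -/
def σz : Matrix (Fin 2) (Fin 2) ℂ := !![1, 0; 0, -1]

/-- Embedding of a single-spin operator `m` at site `k` of an `N`-spin system:
`m^{(k)} f g = m (f k) (g k)` if `f j = g j` for all `j ≠ k`, and `0` otherwise. -/
def embed {N : ℕ} (m : Matrix (Fin 2) (Fin 2) ℂ) (k : Fin N) :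
    Matrix (Fin N → Fin 2) (Fin N → Fin 2) ℂ :=
  fun f g => if ∀ j, j ≠ k → f j = g j then m (f k) (g k) else 0

/-- The collective lowering operator `S₋ = ∑ₖ σ₋^{(k)}`. -/
noncomputable def Sminus (N : ℕ) : Matrix (Fin N → Fin 2) (Fin N → Fin 2) ℂ := ∑ k, embed σm k

/-- The collective raising operator `S₊ = ∑ₖ σ₊^{(k)}`. -/
noncomputable def Splus (N : ℕ) : Matrix (Fin N → Fin 2) (Fin N → Fin 2) ℂ := ∑ k, embed σp k

/-- The collective operator `S_z = ∑ₖ σ_z^{(k)}`. -/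
noncomputable def Sz (N : ℕ) : Matrix (Fin N → Fin 2) (Fin N → Fin 2) ℂ := ∑ k, embed σz k

/-- The product state `ρ^{⊗N}` with entries `∏ₖ ρ (f k) (g k)`. -/
noncomputable def prodState (N : ℕ) (ρ : Matrix (Fin 2) (Fin 2) ℂ) :
    Matrix (Fin N → Fin 2) (Fin N → Fin 2) ℂ :=
  fun f g => ∏ k, ρ (f k) (g k)

section Aux

variable {N : ℕ}


lemma embed_add (m n : Matrix (Fin 2) (Fin 2) ℂ) (k : Fin N) :
    embed (m + n) k = embed m k + embed n k := by
  ext f g; simp only [embed, Matrix.add_apply]; split <;> simp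

lemma embed_smul (c : ℂ) (m : Matrix (Fin 2) (Fin 2) ℂ) (k : Fin N) :
    embed (c • m) k = c • embed m k := by
  ext f g; simp only [embed, Matrix.smul_apply, smul_eq_mul]; split <;> simp

lemma embed_zero (k : Fin N) : embed (0 : Matrix (Fin 2) (Fin 2) ℂ) k = 0 := by
  ext f g; simp [embed]

lemma embed_one (k : Fin N) : embed (1 : Matrix (Fin 2) (Fin 2) ℂ) k = 1 := by
  ext f g
  by_cases h : f = g
  · subst h; simp [embed, Matrix.one_apply]
  · rw [Matrix.one_apply_ne h]
    simp only [embed]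
    split
    · rename_i hc
      have hfk : f k ≠ g k := by
        intro hk
        refine h (funext fun j => ?_)
        by_cases hj : j = k
        · subst hj; exact hk
        · exact hc j hj
      exact Matrix.one_apply_ne hfk
    · rfl

/-- Sums over `Fin N → Fin 2` of terms vanishing unless `h` agrees with `f` off `k`
reduce to a sum over the value at `k`. -/
lemma sum_update (f : Fin N → Fin 2) (k : Fin N) (T : (Fin N → Fin 2) → ℂ)
    (hT : ∀ h, ¬(∀ j, j ≠ k → f j = h j) → T h = 0) :
    ∑ h, T h = ∑ x, T (Function.update f k x) := by
  rw [← Finset.sum_image (f := T) (g := Function.update f k)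
      (by intro x _ y _ h; exact Function.update_injective f k h)]
  apply (Finset.sum_subset (Finset.subset_univ _) _).symm
  intro h _ hh
  apply hT
  intro hc
  apply hh
  simp only [Finset.mem_image, Finset.mem_univ, true_and]
  refine ⟨h k, funext fun j => ?_⟩
  by_cases hj : j = k
  · subst hj; simp
  · rw [Function.update_of_ne hj]; exact hc j hj

lemma cond_update_left (f g : Fin N → Fin 2) (k : Fin N) (x : Fin 2) :
    (∀ j, j ≠ k → Function.update f k x j = g j) ↔ (∀ j, j ≠ k → f j = g j) :=
  forall_congr' fun j => imp_congr_right fun hj => by rw [Function.update_of_ne hj]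

lemma cond_update_right (f g : Fin N → Fin 2) (k : Fin N) (x : Fin 2) :
    (∀ j, j ≠ k → g j = Function.update f k x j) ↔ (∀ j, j ≠ k → g j = f j) :=
  forall_congr' fun j => imp_congr_right fun hj => by rw [Function.update_of_ne hj]

lemma embed_mul (m n : Matrix (Fin 2) (Fin 2) ℂ) (k : Fin N) :
    embed (m * n) k = embed m k * embed n k := by
  ext f g
  rw [Matrix.mul_apply, sum_update f k _ (fun h hh => by
    simp only [embed]; rw [if_neg hh, zero_mul])]
  simp only [embed, cond_update_left, cond_update_right, Function.update_self]
  by_cases hc : ∀ j, j ≠ k → f j = g j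
  · rw [if_pos hc, Matrix.mul_apply]
    exact (Finset.sum_congr rfl fun x _ => by rw [if_pos (fun j (_ : j ≠ k) => trivial), if_pos hc]).symm
  · rw [if_neg hc]
    exact (Finset.sum_eq_zero fun x _ => by rw [if_neg hc, mul_zero]).symm

lemma embed_mul_embed_ne (m n : Matrix (Fin 2) (Fin 2) ℂ) {j k : Fin N} (hjk : j ≠ k) :
    embed m j * embed n k =
      fun f g => if ∀ l, l ≠ j → l ≠ k → f l = g l
        then m (f j) (g j) * n (f k) (g k) else 0 := by
  funext f g
  show ∑ h, embed m j f h * embed n k h g = _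
  rw [sum_update f j _ (fun h hh => by
    simp only [embed]; rw [if_neg hh, zero_mul])]
  simp only [embed, cond_update_left, cond_update_right, eq_self_iff_true, implies_true, if_true]
  have hupk : ∀ x, Function.update f j x k = f k := fun x => Function.update_of_ne hjk.symm _ _
  by_cases hc : ∀ l, l ≠ j → l ≠ k → f l = g l
  · rw [if_pos hc, Finset.sum_eq_single (g j)]
    · have hcond : ∀ l, l ≠ k → Function.update f j (g j) l = g l := by
        intro l hl
        by_cases hlj : l = j
        · subst hlj; simp
        · rw [Function.update_of_ne hlj]; exact hc l hlj hl
      rw [if_pos hcond, hupk, Function.update_self]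
    · intro x _ hx
      rw [if_neg, mul_zero]
      intro hcond
      exact hx (by simpa using hcond j hjk)
    · intro h; exact absurd (Finset.mem_univ _) h
  · rw [if_neg hc]
    refine Finset.sum_eq_zero fun x _ => ?_
    rw [if_neg, mul_zero]
    intro hcond
    apply hc
    intro l hlj hlk
    have := hcond l hlk
    rwa [Function.update_of_ne hlj] at this

lemma commute_embed (m n : Matrix (Fin 2) (Fin 2) ℂ) {j k : Fin N} (hjk : j ≠ k) :
    Commute (embed m j) (embed n k) := by
  show _ = _
  rw [embed_mul_embed_ne m n hjk, embed_mul_embed_ne n m hjk.symm]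
  funext f g
  by_cases h1 : ∀ l, l ≠ j → l ≠ k → f l = g l
  · rw [if_pos h1, if_pos (fun l a b => h1 l b a), mul_comm]
  · rw [if_neg h1, if_neg (fun hcc => h1 fun l a b => hcc l b a)]

/-- `embed · k` as a `ℂ`-algebra homomorphism. -/
def embedHom (k : Fin N) :
    Matrix (Fin 2) (Fin 2) ℂ →ₐ[ℂ] Matrix (Fin N → Fin 2) (Fin N → Fin 2) ℂ where
  toFun m := embed m k
  map_one' := embed_one k
  map_mul' m n := embed_mul m n k
  map_zero' := embed_zero k
  map_add' m n := embed_add m n k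
  commutes' c := by
    show embed (algebraMap ℂ _ c) k = algebraMap ℂ _ c
    rw [Algebra.algebraMap_eq_smul_one, Algebra.algebraMap_eq_smul_one, embed_smul, embed_one]

lemma embed_exp (m : Matrix (Fin 2) (Fin 2) ℂ) (k : Fin N) :
    NormedSpace.exp (embed m k) = embed (NormedSpace.exp m) k := by
  letI : SeminormedRing (Matrix (Fin 2) (Fin 2) ℂ) := Matrix.linftyOpSemiNormedRing
  letI : NormedRing (Matrix (Fin 2) (Fin 2) ℂ) := Matrix.linftyOpNormedRing
  letI : NormedAlgebra ℂ (Matrix (Fin 2) (Fin 2) ℂ) := Matrix.linftyOpNormedAlgebra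
  letI : SeminormedRing (Matrix (Fin N → Fin 2) (Fin N → Fin 2) ℂ) :=
    Matrix.linftyOpSemiNormedRing
  letI : NormedRing (Matrix (Fin N → Fin 2) (Fin N → Fin 2) ℂ) := Matrix.linftyOpNormedRing
  letI : NormedAlgebra ℂ (Matrix (Fin N → Fin 2) (Fin N → Fin 2) ℂ) :=
    Matrix.linftyOpNormedAlgebra
  letI : NormedAlgebra ℚ (Matrix (Fin 2) (Fin 2) ℂ) := NormedAlgebra.restrictScalars ℚ ℂ _
  exact (NormedSpace.map_exp (embedHom (N := N) k)
    (embedHom (N := N) k).toLinearMap.continuous_of_finiteDimensional m).symm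

lemma pairwise_commute_embed (m : Matrix (Fin 2) (Fin 2) ℂ) (s : Finset (Fin N)) :
    (↑s : Set (Fin N)).Pairwise (Function.onFun Commute fun k => embed m k) :=
  fun j _ k _ hjk => commute_embed m m hjk

lemma noncommProd_embed (m : Matrix (Fin 2) (Fin 2) ℂ) (s : Finset (Fin N)) :
    s.noncommProd (fun k => embed m k) (pairwise_commute_embed m s) =
      fun f g => if ∀ j, j ∉ s → f j = g j then ∏ k ∈ s, m (f k) (g k) else 0 := by
  classical
  induction s using Finset.induction_on with
  | empty =>
    funext f g
    simp only [Finset.noncommProd_empty, Finset.notMem_empty, not_false_iff, forall_true_left,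
      Finset.prod_empty]
    by_cases h : f = g
    · subst h; simp [Matrix.one_apply]
    · rw [Matrix.one_apply_ne h, if_neg (fun hc => h (funext fun j => hc j))]
  | @insert i s his ih =>
    rw [Finset.noncommProd_insert_of_notMem _ _ _ _ his]
    funext f g
    show ∑ h, embed m i f h * Finset.noncommProd s (fun k => embed m k) _ h g = _
    have hQ : Finset.noncommProd s (fun k => embed m k) _ =
        fun f g => if ∀ j, j ∉ s → f j = g j then ∏ k ∈ s, m (f k) (g k) else 0 := ih
    rw [hQ]
    rw [sum_update f i _ (fun h hh => by
      simp only [embed]; rw [if_neg hh, zero_mul])]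
    simp only [embed, cond_update_left, cond_update_right, eq_self_iff_true, implies_true,
      if_true, Function.update_self]
    by_cases hc : ∀ j, j ∉ insert i s → f j = g j
    · rw [if_pos hc, Finset.sum_eq_single (g i)]
      · have hcond : ∀ j, j ∉ s → Function.update f i (g i) j = g j := by
          intro j hj
          by_cases hji : j = i
          · subst hji; simp
          · rw [Function.update_of_ne hji]
            exact hc j (by simp [hji, hj])
        rw [if_pos hcond, Finset.prod_insert his]
        rw [Finset.prod_congr rfl (fun k hk =>
          by rw [Function.update_of_ne (fun h => his (by rwa [h] at hk))])]
      · intro x _ hx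
        rw [if_neg, mul_zero]
        intro hcond
        exact hx (by simpa using hcond i his)
      · intro h; exact absurd (Finset.mem_univ _) h
    · rw [if_neg hc]
      refine Finset.sum_eq_zero fun x _ => ?_
      by_cases hcond : ∀ j, j ∉ s → Function.update f i x j = g j
      · exfalso
        apply hc
        intro j hj
        have hji : j ≠ i := fun h => hj (h ▸ Finset.mem_insert_self i s)
        have := hcond j (fun hs => hj (Finset.mem_insert_of_mem hs))
        rwa [Function.update_of_ne hji] at this
      · rw [if_neg hcond, mul_zero]

lemma exp_sum_embed (m : Matrix (Fin 2) (Fin 2) ℂ) :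
    NormedSpace.exp (∑ k : Fin N, embed m k) =
      Matrix.of (fun f g : Fin N → Fin 2 => ∏ k, (NormedSpace.exp m) (f k) (g k)) := by
  rw [Matrix.exp_sum_of_commute Finset.univ (fun k => embed m k)
    (pairwise_commute_embed m Finset.univ)]
  rw [Finset.noncommProd_congr rfl (fun k _ => embed_exp m k)
    (fun j _ k _ hjk => by
      dsimp only [Function.onFun]
      rw [embed_exp, embed_exp]
      exact commute_embed _ _ hjk), noncommProd_embed]
  funext f g
  simp

lemma embed_sub (m n : Matrix (Fin 2) (Fin 2) ℂ) (k : Fin N) :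
    embed (m - n) k = embed m k - embed n k := by
  ext f g; simp only [embed, Matrix.sub_apply]; split <;> simp


lemma trace_factor (ρ E : Matrix (Fin 2) (Fin 2) ℂ) :
    Matrix.trace (prodState N ρ * Matrix.of (fun f g : Fin N → Fin 2 => ∏ k, E (f k) (g k))) =
      (∑ p : Fin 2 × Fin 2, ρ p.1 p.2 * E p.2 p.1) ^ N := by
  rw [Matrix.trace]
  simp only [Matrix.diag_apply, Matrix.mul_apply, prodState, Matrix.of_apply]
  have h1 : ∀ f g : Fin N → Fin 2,
      (∏ k, ρ (f k) (g k)) * ∏ k, E (g k) (f k)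
        = ∏ k, (ρ (f k) (g k) * E (g k) (f k)) := fun f g => Finset.prod_mul_distrib.symm
  simp only [h1]
  have hpow : (∑ p : Fin 2 × Fin 2, ρ p.1 p.2 * E p.2 p.1) ^ N
      = ∑ x : Fin N → Fin 2 × Fin 2, ∏ k, (ρ (x k).1 (x k).2 * E (x k).2 (x k).1) := by
    calc (∑ p : Fin 2 × Fin 2, ρ p.1 p.2 * E p.2 p.1) ^ N
        = ∏ _i : Fin N, ∑ p : Fin 2 × Fin 2, (ρ p.1 p.2 * E p.2 p.1) := by
          rw [Finset.prod_const, Finset.card_univ, Fintype.card_fin]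
      _ = _ := Fintype.prod_sum _
  rw [hpow]
  exact ((Equiv.sum_comp (Equiv.arrowProdEquivProdArrow (Fin N) (fun _ => Fin 2) (fun _ => Fin 2))
      (fun q => ∏ k, ρ (q.1 k) (q.2 k) * E (q.2 k) (q.1 k))).trans
    (Fintype.sum_prod_type _)).symm

lemma exp_offdiag_entries (a s t r : ℂ) (hst : s * t = r ^ 2) (hs : s ≠ 0) (hr : r ≠ 0)
    (i : Fin 2) :
    (NormedSpace.exp !![0, a * s; -(a * t), 0]) i i
      = (Complex.exp (a * r * Complex.I) + Complex.exp (-(a * r * Complex.I))) / 2 := by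
  have hI := Complex.I_mul_I
  set μ : ℂ := a * r * Complex.I with hμ
  have hdet : (!![s, s; Complex.I * r, -(Complex.I * r)] : Matrix (Fin 2) (Fin 2) ℂ).det
      = -(2 * Complex.I * s * r) := by
    rw [Matrix.det_fin_two_of]
    ring
  have hP : IsUnit (!![s, s; Complex.I * r, -(Complex.I * r)] : Matrix (Fin 2) (Fin 2) ℂ).det := by
    rw [hdet]
    apply Ne.isUnit
    simp only [ne_eq, neg_eq_zero, mul_eq_zero, not_or]
    exact ⟨⟨⟨two_ne_zero, Complex.I_ne_zero⟩, hs⟩, hr⟩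
  have hAP : !![0, a * s; -(a * t), 0] * !![s, s; Complex.I * r, -(Complex.I * r)]
      = !![s, s; Complex.I * r, -(Complex.I * r)] * Matrix.diagonal ![μ, -μ] := by
    ext x y
    fin_cases x <;> fin_cases y <;>
      · simp [Matrix.mul_apply, Fin.sum_univ_two, hμ]
        first
        | ring1
        | linear_combination (-a) * hst + (-(a * r ^ 2)) * hI
  have hA : !![0, a * s; -(a * t), 0] =
      !![s, s; Complex.I * r, -(Complex.I * r)] * Matrix.diagonal ![μ, -μ] *
        (!![s, s; Complex.I * r, -(Complex.I * r)])⁻¹ := by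
    rw [← hAP, Matrix.mul_assoc, Matrix.mul_nonsing_inv _ hP, Matrix.mul_one]
  have hexpD : NormedSpace.exp (Matrix.diagonal ![μ, -μ])
      = Matrix.diagonal ![Complex.exp μ, Complex.exp (-μ)] := by
    rw [Matrix.exp_diagonal]
    ext x y
    fin_cases x <;> fin_cases y <;>
      simp [Matrix.diagonal_apply, Complex.exp_eq_exp_ℂ]
  have hexp : NormedSpace.exp !![0, a * s; -(a * t), 0]
      = !![s, s; Complex.I * r, -(Complex.I * r)] *
          Matrix.diagonal ![Complex.exp μ, Complex.exp (-μ)] *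
          (!![s, s; Complex.I * r, -(Complex.I * r)])⁻¹ := by
    rw [hA, Matrix.exp_conj _ _ ((Matrix.isUnit_iff_isUnit_det _).mpr hP), hexpD]
  rw [hexp]
  have hdetne : (!![s, s; Complex.I * r, -(Complex.I * r)] : Matrix (Fin 2) (Fin 2) ℂ).det ≠ 0 :=
    hP.ne_zero
  fin_cases i <;>
    · simp [Matrix.mul_apply, Fin.sum_univ_two, Matrix.inv_def, Matrix.adjugate_fin_two,
        Ring.inverse_eq_inv', hdet, Matrix.vecMul_diagonal]
      field_simp
      ring_nf
      rw [Complex.I_sq]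
      ring

end Aux

/-- Finite-`N` characteristic function of the collective displacement-like operator:
for a diagonal single-spin state `ρ` of unit trace,
`Tr(ρ^{⊗N} exp(λ (s S₊ - s̄ S₋))) = (cos(λ |s|))^N`. -/
theorem characteristic_function_finite (N : ℕ) (ρ : Matrix (Fin 2) (Fin 2) ℂ)
    (hd1 : ρ 0 1 = 0) (hd2 : ρ 1 0 = 0) (htr : ρ 0 0 + ρ 1 1 = 1)
    (lam : ℝ) (s : ℂ) :
    Matrix.trace (prodState N ρ *
        NormedSpace.exp (lam • (s • Splus N - (starRingEnd ℂ) s • Sminus N)))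
      = (((Real.cos (lam * ‖s‖)) ^ N : ℝ) : ℂ) := by
  classical
  set A : Matrix (Fin 2) (Fin 2) ℂ :=
    !![0, (lam : ℂ) * s; -((lam : ℂ) * (starRingEnd ℂ) s), 0] with hAdef
  have hA2 : (lam : ℂ) • (s • σp - (starRingEnd ℂ) s • σm) = A := by
    ext i j
    fin_cases i <;> fin_cases j <;> simp [σp, σm, hAdef] <;> ring
  have hop : lam • (s • Splus N - (starRingEnd ℂ) s • Sminus N) = ∑ k : Fin N, embed A k := by
    have h0 : lam • (s • Splus N - (starRingEnd ℂ) s • Sminus N)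
        = ((lam : ℂ)) • (s • Splus N - (starRingEnd ℂ) s • Sminus N) := by
      ext f g
      simp [Complex.real_smul]
    rw [h0, Splus, Sminus, Finset.smul_sum, Finset.smul_sum, ← Finset.sum_sub_distrib,
      Finset.smul_sum]
    refine Finset.sum_congr rfl fun k _ => ?_
    rw [← embed_smul, ← embed_smul, ← embed_sub, ← embed_smul, hA2]
  rw [hop, exp_sum_embed, trace_factor]
  have hsum : (∑ p : Fin 2 × Fin 2, ρ p.1 p.2 * (NormedSpace.exp A) p.2 p.1)
      = ρ 0 0 * (NormedSpace.exp A) 0 0 + ρ 1 1 * (NormedSpace.exp A) 1 1 := by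
    rw [Fintype.sum_prod_type]
    simp [Fin.sum_univ_two, hd1, hd2]
  rw [hsum]
  by_cases hs : s = 0
  · subst hs
    have hA0 : A = 0 := by
      ext i j
      fin_cases i <;> fin_cases j <;> simp [hAdef]
    have hexp0 : NormedSpace.exp A = 1 := by
      rw [hA0]
      letI : SeminormedRing (Matrix (Fin 2) (Fin 2) ℂ) := Matrix.linftyOpSemiNormedRing
      letI : NormedRing (Matrix (Fin 2) (Fin 2) ℂ) := Matrix.linftyOpNormedRing
      letI : NormedAlgebra ℂ (Matrix (Fin 2) (Fin 2) ℂ) := Matrix.linftyOpNormedAlgebra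
      exact NormedSpace.exp_zero
    rw [hexp0]
    simp only [Matrix.one_apply_eq, mul_one, htr, norm_zero, mul_zero, Real.cos_zero, one_pow]
    norm_num
  · have hrne : ((‖s‖ : ℝ) : ℂ) ≠ 0 := by
      simp only [ne_eq, Complex.ofReal_eq_zero, norm_eq_zero]
      exact hs
    have hst : s * (starRingEnd ℂ) s = ((‖s‖ : ℝ) : ℂ) ^ 2 := by
      rw [Complex.mul_conj, ← Complex.sq_norm]
      push_cast
      ring
    have hE : ∀ i : Fin 2, (NormedSpace.exp A) i i
        = Complex.cos ((lam * ‖s‖ : ℝ) : ℂ) := by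
      intro i
      rw [hAdef]
      rw [exp_offdiag_entries ((lam : ℂ)) s ((starRingEnd ℂ) s) ((‖s‖ : ℝ) : ℂ)
        hst hs hrne i]
      have hz : ((lam : ℂ)) * ((‖s‖ : ℝ) : ℂ) = ((lam * ‖s‖ : ℝ) : ℂ) := by
        push_cast
        ring
      rw [hz]
      rw [show Complex.cos ((lam * ‖s‖ : ℝ) : ℂ)
          = (Complex.exp (((lam * ‖s‖ : ℝ) : ℂ) * Complex.I)
            + Complex.exp (-(((lam * ‖s‖ : ℝ) : ℂ)) * Complex.I)) / 2 from rfl]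
      rw [neg_mul]
    rw [hE 0, hE 1, ← add_mul, htr, one_mul, Complex.ofReal_pow, Complex.ofReal_cos]
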